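/- Let $G$ be a finite group, $x \in G$, and $L \trianglelefteq M \trianglelefteq G$ with $x \in M$. Then $|(xL)^{M/L}|$ divides $|x^G|$. -/

import Mathlib

open Subgroup MulAction Pointwise

/-- Cardinality of a conjugacy class equals the index of the centralizer. -/
private lemma card_isConj_eq_index {H : Type*} [Group H] (a : H) :
    Nat.card {y : H | IsConj a y} = (Subgroup.centralizer {a}).index := by
  have hset : {y : H | IsConj a y} = MulAction.orbit (ConjAct H) a := by
    ext y
    simp only [Set.mem_setOf_eq, ConjAct.mem_orbit_conjAct]
    exact isConj_comm
  rw [hset, Nat.card_coe_set_eq, ← MulAction.index_stabilizer,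
    Subgroup.centralizer_eq_comap_stabilizer]
  exact (Subgroup.index_comap_of_surjective (f := (ConjAct.toConjAct : H ≃* ConjAct H).toMonoidHom)
    (MulAction.stabilizer (ConjAct H) a) ConjAct.toConjAct.surjective).symm

/-- If `K` is normal then the relative index of `H` in `K` divides the index of `H`. -/
private lemma relindex_dvd_index_of_normal_right {G : Type*} [Group G] (H K : Subgroup G)
    (hK : K.Normal) : H.relIndex K ∣ H.index := by
  have key : H.relIndex K = H.relIndex (H ⊔ K) := by
    apply Nat.card_congr
    refine Equiv.ofBijective
      (Quotient.map' (fun k => (⟨(k : G), Subgroup.mem_sup_right k.2⟩ : (H ⊔ K : Subgroup G)))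
        ?_) ⟨?_, ?_⟩
    · intro a b hab
      rw [QuotientGroup.leftRel_apply] at *
      simpa [Subgroup.mem_subgroupOf] using hab
    · intro a b
      refine Quotient.inductionOn₂' a b fun a b h => ?_
      rw [Quotient.map'_mk'', Quotient.map'_mk'', Quotient.eq''] at h
      rw [QuotientGroup.leftRel_apply, Subgroup.mem_subgroupOf] at h
      apply Quotient.sound'
      rw [QuotientGroup.leftRel_apply, Subgroup.mem_subgroupOf]
      simpa using h
    · intro q
      refine Quotient.inductionOn' q fun g => ?_
      have hg : (g : G) ∈ ((K : Set G) * (H : Set G)) := by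
        rw [← Subgroup.normal_mul, sup_comm]
        exact g.2
      obtain ⟨k, hk, h, hh, hkh⟩ := hg
      refine ⟨Quotient.mk'' ⟨k, hk⟩, ?_⟩
      rw [Quotient.map'_mk'']
      apply Quotient.sound'
      rw [QuotientGroup.leftRel_apply, Subgroup.mem_subgroupOf]
      simp only [MulMemClass.mk_mul_mk, InvMemClass.coe_inv]
      have : k⁻¹ * (g : G) = h := by rw [← hkh]; group
      simpa [this] using hh
  rw [key]
  exact Subgroup.relIndex_dvd_index_of_le le_sup_left

theorem card_conjClass_subquotient_dvd {G : Type*} [Group G] [Finite G]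
    (L M : Subgroup G) (hL : L.Normal) (hM : M.Normal) (hLM : L ≤ M)
    (x : G) (hx : x ∈ M) :
    haveI : (L.subgroupOf M).Normal := hL.subgroupOf M
    Nat.card {y : M ⧸ L.subgroupOf M | IsConj ((⟨x, hx⟩ : M) : M ⧸ L.subgroupOf M) y} ∣
      Nat.card {y : G | IsConj x y} := by
  haveI : (L.subgroupOf M).Normal := hL.subgroupOf M
  set x' : M := ⟨x, hx⟩
  set π : M →* M ⧸ L.subgroupOf M := QuotientGroup.mk' (L.subgroupOf M)
  have hπ : Function.Surjective π := QuotientGroup.mk'_surjective _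
  rw [card_isConj_eq_index, card_isConj_eq_index]
  -- index of centralizer in the quotient = index of its comap in M
  rw [← Subgroup.index_comap_of_surjective (Subgroup.centralizer {(x' : M ⧸ L.subgroupOf M)}) hπ]
  -- centralizer of x' in M is contained in the comap
  have hle : Subgroup.centralizer {x'} ≤
      (Subgroup.centralizer {(x' : M ⧸ L.subgroupOf M)}).comap π := by
    intro m hm
    rw [Subgroup.mem_comap, Subgroup.mem_centralizer_iff]
    rw [Subgroup.mem_centralizer_iff] at hm
    intro g hg
    rw [Set.mem_singleton_iff] at hg
    subst hg
    have := hm x' (Set.mem_singleton _)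
    exact (map_mul π x' m).symm.trans ((congrArg π this).trans (map_mul π m x'))
  refine dvd_trans (Subgroup.index_dvd_of_le hle) ?_
  -- centralizer of x' in M = subgroupOf of centralizer of x in G
  have hcent : Subgroup.centralizer {x'} = (Subgroup.centralizer {x}).subgroupOf M := by
    ext m
    simp only [Subgroup.mem_centralizer_iff, Subgroup.mem_subgroupOf, Set.mem_singleton_iff,
      forall_eq]
    constructor
    · intro h
      exact congrArg Subtype.val h
    · intro h
      exact Subtype.ext h
  rw [hcent]
  exact relindex_dvd_index_of_normal_right _ _ hM
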